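/- Born's rule from unitary invariance: Let H be N-dimensional with orthonormal basis {|ψ_k⟩} and let p_a = |a⟩⟨a| for a unit vector a. Work on Sym^M(H) with number operators N_{ψ_k} = dΓ(p_{ψ_k}) and N_a = dΓ(p_a). Suppose ⟨·⟩ is a linear functional on operators on Sym^M(H) such that (i) ⟨Γ(U_θ)* X Γ(U_θ)⟩ = ⟨X⟩ for all θ ∈ ℝ^N, where U_θ = Σ_k e^{iθ_k} p_{ψ_k}, and (ii) ⟨N_{ψ_k}⟩ = δ_{k,k₀} for a fixed k₀. Then ⟨N_a⟩ = |⟨a|ψ_{k₀}⟩|². -/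

import Mathlib

open Complex Finset
open scoped InnerProductSpace

noncomputable section

variable {H : Type*} [NormedAddCommGroup H] [InnerProductSpace ℂ H] [FiniteDimensional ℂ H]

/-- The rank-one operator `|u⟩⟨v|`. -/
def rankOne (u v : H) : H →ₗ[ℂ] H where
  toFun x := ⟪v, x⟫_ℂ • u
  map_add' x y := by simp [inner_add_right, add_smul]
  map_smul' c x := by simp [inner_smul_right, smul_smul]

/-- The phase unitary `U(θ) = Σ_n e^{iθ_n} |a_n⟩⟨a_n|`. -/
def phaseU {N : ℕ} (a : OrthonormalBasis (Fin N) ℂ H) (θ : Fin N → ℝ) : H →ₗ[ℂ] H :=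
  ∑ n, Complex.exp ((θ n : ℂ) * Complex.I) • rankOne (a n) (a n)

set_option linter.unusedSectionVars false

lemma rankOne_apply (u v x : H) : rankOne u v x = ⟪v, x⟫_ℂ • u := rfl

variable {N : ℕ} (ψ : OrthonormalBasis (Fin N) ℂ H)

lemma inner_basis (i j : Fin N) : ⟪ψ i, ψ j⟫_ℂ = if i = j then 1 else 0 :=
  orthonormal_iff_ite.mp ψ.orthonormal i j

lemma phaseU_apply (θ : Fin N → ℝ) (x : H) :
    phaseU ψ θ x = ∑ n, Complex.exp ((θ n : ℂ) * Complex.I) • (⟪ψ n, x⟫_ℂ • ψ n) := by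
  simp [phaseU, rankOne_apply]

lemma phaseU_basis (θ : Fin N → ℝ) (k : Fin N) :
    phaseU ψ θ (ψ k) = Complex.exp ((θ k : ℂ) * Complex.I) • ψ k := by
  rw [phaseU_apply]
  simp [inner_basis, ite_smul]

lemma phaseU_inv (θ : Fin N → ℝ) (x : H) :
    phaseU ψ (fun n => -θ n) (phaseU ψ θ x) = x := by
  conv_rhs => rw [← ψ.sum_repr' x]
  rw [phaseU_apply ψ θ x, map_sum]
  simp only [map_smul, phaseU_basis, smul_smul]
  refine Finset.sum_congr rfl fun n _ => ?_
  congr 1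
  push_cast
  rw [mul_comm, ← mul_assoc, ← Complex.exp_add]
  ring_nf
  simp

lemma inner_phaseU (θ : Fin N → ℝ) (u v : H) :
    ⟪phaseU ψ (fun n => -θ n) u, v⟫_ℂ = ⟪u, phaseU ψ θ v⟫_ℂ := by
  rw [phaseU_apply, phaseU_apply, sum_inner, inner_sum]
  refine Finset.sum_congr rfl fun n _ => ?_
  simp only [inner_smul_left, inner_smul_right, inner_conj_symm]
  rw [← Complex.exp_conj]
  push_cast
  simp only [map_mul, Complex.conj_I, map_neg, Complex.conj_ofReal]
  ring

lemma phaseU_rankOne (θ : Fin N → ℝ) (k l : Fin N) (v : H) :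
    rankOne (ψ k) (ψ l) (phaseU ψ θ v)
      = Complex.exp ((θ l : ℂ) * Complex.I) • rankOne (ψ k) (ψ l) v := by
  simp only [rankOne_apply, phaseU_apply, inner_sum, inner_smul_right, inner_basis]
  rw [Finset.sum_eq_single l]
  · simp [smul_smul]
  · intro n _ hn; simp [hn, Ne.symm hn]
  · simp

/-- Born's rule from unitary invariance: if a linear functional `⟨·⟩` on the
operators of `Sym^M(H)` is invariant under conjugation by all `Γ(U_θ)`,
`U_θ = Σ_k e^{iθ_k} p_{ψ_k}`, and satisfies `⟨N_{ψ_k}⟩ = δ_{k,k₀}`, then for any unit vector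
`a` the number operator `N_a = dΓ(|a⟩⟨a|)` has average `⟨N_a⟩ = |⟨a|ψ_{k₀}⟩|²`. -/
theorem stmt_14 {N M : ℕ} {F : Type*} [NormedAddCommGroup F] [InnerProductSpace ℂ F]
    [FiniteDimensional ℂ F]
    (ψ : OrthonormalBasis (Fin N) ℂ H) (a : H) (ha : ‖a‖ = 1)
    (sym : MultilinearMap ℂ (fun _ : Fin M => H) F)
    (hsymm : ∀ (φ : Fin M → H) (τ : Equiv.Perm (Fin M)), sym (φ ∘ τ) = sym φ)
    (hspan : Submodule.span ℂ (Set.range ⇑sym) = ⊤)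
    (hinner : ∀ φ χ : Fin M → H,
      ⟪sym φ, sym χ⟫_ℂ = ∑ τ : Equiv.Perm (Fin M), ∏ i, ⟪φ i, χ (τ i)⟫_ℂ)
    (Γ : (H →ₗ[ℂ] H) → (F →ₗ[ℂ] F))
    (hΓ : ∀ (O : H →ₗ[ℂ] H) (φ : Fin M → H), Γ O (sym φ) = sym (fun i => O (φ i)))
    (dΓ : (H →ₗ[ℂ] H) → (F →ₗ[ℂ] F))
    (hdΓ : ∀ (X : H →ₗ[ℂ] H) (φ : Fin M → H),
      dΓ X (sym φ) = ∑ m, sym (Function.update φ m (X (φ m))))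
    (E : (F →ₗ[ℂ] F) →ₗ[ℂ] ℂ)
    (hinv : ∀ (θ : Fin N → ℝ) (X : F →ₗ[ℂ] F),
      E (LinearMap.adjoint (Γ (phaseU ψ θ)) * X * Γ (phaseU ψ θ)) = E X)
    (k₀ : Fin N)
    (hE : ∀ k : Fin N, E (dΓ (rankOne (ψ k) (ψ k))) = if k = k₀ then 1 else 0) :
    E (dΓ (rankOne a a)) = (‖⟪a, ψ k₀⟫_ℂ‖ ^ 2 : ℂ) := by

  classical
  -- extension lemma from the spanning set
  have extsym : ∀ {A B : F →ₗ[ℂ] F}, (∀ φ, A (sym φ) = B (sym φ)) → A = B := by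
    intro A B h
    apply LinearMap.ext_on hspan
    rintro x ⟨φ, rfl⟩
    exact h φ
  -- the adjoint of Γ(U_θ) is Γ(U_{-θ})
  have hadj : ∀ θ : Fin N → ℝ,
      LinearMap.adjoint (Γ (phaseU ψ θ)) = Γ (phaseU ψ (fun n => -θ n)) := by
    intro θ
    symm
    rw [LinearMap.eq_adjoint_iff]
    have h0 : ∀ φ χ : Fin M → H,
        ⟪Γ (phaseU ψ (fun n => -θ n)) (sym φ), sym χ⟫_ℂ
          = ⟪sym φ, Γ (phaseU ψ θ) (sym χ)⟫_ℂ := by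
      intro φ χ
      rw [hΓ, hΓ, hinner, hinner]
      refine Finset.sum_congr rfl fun τ _ => Finset.prod_congr rfl fun i _ => ?_
      exact inner_phaseU ψ θ (φ i) (χ (τ i))
    have h1 : ∀ (φ : Fin M → H) (y : F),
        ⟪Γ (phaseU ψ (fun n => -θ n)) (sym φ), y⟫_ℂ = ⟪sym φ, Γ (phaseU ψ θ) y⟫_ℂ := by
      intro φ
      have hmaps : (innerₛₗ ℂ (Γ (phaseU ψ (fun n => -θ n)) (sym φ)))
          = (innerₛₗ ℂ (sym φ)).comp (Γ (phaseU ψ θ)) := by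
        apply LinearMap.ext_on hspan
        rintro x ⟨χ, rfl⟩
        simpa using h0 φ χ
      intro y
      simpa using LinearMap.congr_fun hmaps y
    intro x y
    have h2 : ((innerₛₗ ℂ y).comp (Γ (phaseU ψ (fun n => -θ n))))
        = innerₛₗ ℂ (Γ (phaseU ψ θ) y) := by
      apply LinearMap.ext_on hspan
      rintro x ⟨φ, rfl⟩
      have := congrArg (starRingEnd ℂ) (h1 φ y)
      simpa [inner_conj_symm] using this
    have h3 := LinearMap.congr_fun h2 x
    simp only [LinearMap.comp_apply, innerₛₗ_apply_apply] at h3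
    rw [← inner_conj_symm, h3, inner_conj_symm]
  -- conjugation by Γ(U_θ) multiplies dΓ(|ψ_k⟩⟨ψ_l|) by a phase
  have hconj : ∀ (θ : Fin N → ℝ) (k l : Fin N),
      Γ (phaseU ψ (fun n => -θ n)) * dΓ (rankOne (ψ k) (ψ l)) * Γ (phaseU ψ θ)
        = (Complex.exp ((θ l : ℂ) * Complex.I)
            * Complex.exp ((-θ k : ℂ) * Complex.I)) • dΓ (rankOne (ψ k) (ψ l)) := by
    intro θ k l
    apply extsym
    intro φ
    rw [Module.End.mul_apply, Module.End.mul_apply, hΓ, hdΓ, map_sum,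
      LinearMap.smul_apply, hdΓ, Finset.smul_sum]
    refine Finset.sum_congr rfl fun m _ => ?_
    rw [hΓ]
    have hupd : (fun i => phaseU ψ (fun n => -θ n)
        (Function.update (fun j => phaseU ψ θ (φ j)) m
          (rankOne (ψ k) (ψ l) (phaseU ψ θ (φ m))) i))
        = Function.update φ m
          (phaseU ψ (fun n => -θ n) (rankOne (ψ k) (ψ l) (phaseU ψ θ (φ m)))) := by
      funext i
      rcases eq_or_ne i m with rfl | h
      · simp
      · simp [Function.update_of_ne h, phaseU_inv]
    rw [hupd, phaseU_rankOne, map_smul]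
    have hk : phaseU ψ (fun n => -θ n) (rankOne (ψ k) (ψ l) (φ m))
        = Complex.exp ((-θ k : ℂ) * Complex.I) • rankOne (ψ k) (ψ l) (φ m) := by
      rw [rankOne_apply, map_smul, phaseU_basis]
      rw [smul_comm]
      push_cast
      rfl
    rw [hk, MultilinearMap.map_update_smul, MultilinearMap.map_update_smul, smul_smul]
  -- off-diagonal averages vanish
  have hoff : ∀ k l : Fin N, k ≠ l → E (dΓ (rankOne (ψ k) (ψ l))) = 0 := by
    intro k l hkl
    set θ : Fin N → ℝ := fun n => if n = k then Real.pi else 0 with hθ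
    have h := hinv θ (dΓ (rankOne (ψ k) (ψ l)))
    rw [hadj θ, hconj θ k l, map_smul] at h
    have hθl : θ l = 0 := by simp [hθ, Ne.symm hkl]
    have hθk : θ k = Real.pi := by simp [hθ]
    rw [hθl, hθk] at h
    simp only [Complex.ofReal_zero, zero_mul, Complex.exp_zero, one_mul, smul_eq_mul] at h
    rw [neg_mul, Complex.exp_neg, Complex.exp_pi_mul_I] at h
    norm_num at h
    linear_combination -h / 2
  -- decomposition of |a⟩⟨a| over the basis
  have hdecomp : rankOne a a = ∑ k, ∑ l,
      (⟪ψ k, a⟫_ℂ * (starRingEnd ℂ) ⟪ψ l, a⟫_ℂ) • rankOne (ψ k) (ψ l) := by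
    apply LinearMap.ext
    intro x
    simp only [LinearMap.sum_apply, LinearMap.smul_apply, rankOne_apply]
    conv_lhs => rw [← ψ.sum_repr' a]
    rw [sum_inner, Finset.sum_smul]
    rw [Finset.sum_comm]
    refine Finset.sum_congr rfl fun l _ => ?_
    rw [Finset.smul_sum]
    refine Finset.sum_congr rfl fun k _ => ?_
    simp only [inner_smul_left, smul_smul]
    ring_nf
  -- the corresponding decomposition of dΓ(|a⟩⟨a|)
  have hDdecomp : dΓ (rankOne a a) = ∑ k, ∑ l,
      (⟪ψ k, a⟫_ℂ * (starRingEnd ℂ) ⟪ψ l, a⟫_ℂ) • dΓ (rankOne (ψ k) (ψ l)) := by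
    apply extsym
    intro φ
    rw [hdΓ]
    simp only [LinearMap.sum_apply, LinearMap.smul_apply, hdΓ, Finset.smul_sum, hdecomp]
    have e : ∀ (m : Fin M) (v : H),
        sym (Function.update φ m v) = sym.toLinearMap φ m v := fun m v => rfl
    have L : ∀ m : Fin M,
        sym (Function.update φ m
          (∑ k, ∑ l, (⟪ψ k, a⟫_ℂ * (starRingEnd ℂ) ⟪ψ l, a⟫_ℂ) • rankOne (ψ k) (ψ l) (φ m)))
        = ∑ k, ∑ l, (⟪ψ k, a⟫_ℂ * (starRingEnd ℂ) ⟪ψ l, a⟫_ℂ) •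
            sym (Function.update φ m (rankOne (ψ k) (ψ l) (φ m))) := by
      intro m
      rw [e, map_sum]
      refine Finset.sum_congr rfl fun k _ => ?_
      rw [map_sum]
      refine Finset.sum_congr rfl fun l _ => ?_
      rw [map_smul, ← e]
    rw [Finset.sum_congr rfl fun m _ => L m, Finset.sum_comm]
    refine Finset.sum_congr rfl fun k _ => ?_
    rw [Finset.sum_comm]
  -- put everything together
  rw [hDdecomp, map_sum]
  simp only [map_sum, map_smul, smul_eq_mul]
  have hrow : ∀ k : Fin N,
      ∑ l, (⟪ψ k, a⟫_ℂ * (starRingEnd ℂ) ⟪ψ l, a⟫_ℂ) * E (dΓ (rankOne (ψ k) (ψ l)))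
        = (⟪ψ k, a⟫_ℂ * (starRingEnd ℂ) ⟪ψ k, a⟫_ℂ) * (if k = k₀ then 1 else 0) := by
    intro k
    rw [Finset.sum_eq_single k]
    · rw [hE k]
    · intro l _ hlk
      rw [hoff k l (Ne.symm hlk), mul_zero]
    · intro hk
      exact absurd (Finset.mem_univ k) hk
  rw [Finset.sum_congr rfl fun k _ => hrow k]
  simp only [mul_ite, mul_one, mul_zero]
  rw [Finset.sum_ite_eq' Finset.univ k₀]
  simp only [Finset.mem_univ, if_true]
  rw [Complex.mul_conj]
  norm_cast
  rw [Complex.normSq_eq_norm_sq, norm_inner_symm a (ψ k₀)]
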